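/- Every reverse-Funk horofunction of an open cone C containing no lines is a Busemann point: for each x in the Euclidean boundary of C (lying in the boundary of a cross section D), the straight line segment from an interior point toward x is a geodesic whose limit in the reverse Funk sense is ψ_x := r_C(·,x) − r_C(b,x). -/

import Mathlib

open Set Filter Topology

variable {V : Type*} [NormedAddCommGroup V] [NormedSpace ℝ V] [FiniteDimensional ℝ V]

/-- An open cone: non-empty, open, convex, invariant under positive scaling, not containing 0. -/
def IsOpenCone (T : Set V) : Prop :=
  T.Nonempty ∧ IsOpen T ∧ Convex ℝ T ∧ (∀ c : ℝ, 0 < c → ∀ u ∈ T, c • u ∈ T) ∧ (0 : V) ∉ T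

/-- The gauge `M_T(y/x) = inf {λ > 0 : λ • x - y ∈ closure T}`. -/
noncomputable def funkM (T : Set V) (y x : V) : ℝ :=
  sInf {l : ℝ | 0 < l ∧ l • x - y ∈ closure T}

/-- The Funk metric `F_T(x,y) = log inf {λ > 0 : λ • y - x ∈ closure T}`. -/
noncomputable def funkF (T : Set V) (x y : V) : ℝ := Real.log (funkM T x y)

/-- The reverse Funk metric `r_T(x,y) = F_T(y,x)`. -/
noncomputable def revF (T : Set V) (x y : V) : ℝ := Real.log (funkM T y x)

/-- The Hilbert metric as the symmetrisation of the Funk metric. -/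
noncomputable def hilD (T : Set V) (x y : V) : ℝ := funkF T x y + revF T x y

/-- The dual cone, as a set of continuous linear functionals. -/
def dualCone (T : Set V) : Set (V →L[ℝ] ℝ) := {z | ∀ u ∈ T, 0 ≤ z u}

/-- The open tangent cone `τ(T,x) = {λ (w - x) : λ > 0, w ∈ T}`. -/
def openTangent (T : Set V) (x : V) : Set V :=
  {v | ∃ l : ℝ, 0 < l ∧ ∃ w ∈ T, v = l • (w - x)}

/-! ### Auxiliary lemmas -/

lemma aux_smul_closure {C : Set V} (hC : IsOpenCone C) {c : ℝ} (hc : 0 < c)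
    {v : V} (hv : v ∈ closure C) : c • v ∈ closure C :=
  map_mem_closure (continuous_const_smul c) hv (fun u hu => hC.2.2.2.1 c hc u hu)

lemma aux_zero_mem_closure {C : Set V} (hC : IsOpenCone C) : (0 : V) ∈ closure C := by
  obtain ⟨u, hu⟩ := hC.1
  have ht : Tendsto (fun n : ℕ => (1 / ((n : ℝ) + 1)) • u) atTop (𝓝 0) := by
    have h : Tendsto (fun n : ℕ => 1 / ((n : ℝ) + 1)) atTop (𝓝 0) :=
      tendsto_one_div_add_atTop_nhds_zero_nat
    simpa using h.smul_const u
  exact mem_closure_of_tendsto ht (Filter.Eventually.of_forall fun n =>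
    hC.2.2.2.1 _ (by positivity) u hu)

lemma aux_smul_closure' {C : Set V} (hC : IsOpenCone C) {c : ℝ} (hc : 0 ≤ c)
    {v : V} (hv : v ∈ closure C) : c • v ∈ closure C := by
  rcases hc.lt_or_eq with h | h
  · exact aux_smul_closure hC h hv
  · rw [← h, zero_smul]; exact aux_zero_mem_closure hC

/-- closure C + C ⊆ C -/
lemma aux_closure_add_mem {C : Set V} (hC : IsOpenCone C) {v w : V}
    (hv : v ∈ closure C) (hw : w ∈ C) : v + w ∈ C := by
  have hwi : w ∈ interior C := by rw [hC.2.1.interior_eq]; exact hw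
  have h2 : (1 / 2 : ℝ) • w + (1 / 2 : ℝ) • v ∈ interior C :=
    hC.2.2.1.combo_interior_closure_mem_interior hwi hv (by norm_num) (by norm_num) (by norm_num)
  have h2' : (1 / 2 : ℝ) • w + (1 / 2 : ℝ) • v ∈ C := by rwa [hC.2.1.interior_eq] at h2
  have h3 := hC.2.2.2.1 2 (by norm_num) _ h2'
  convert h3 using 1
  module

lemma aux_add_closure {C : Set V} (hC : IsOpenCone C) {v w : V}
    (hv : v ∈ closure C) (hw : w ∈ closure C) : v + w ∈ closure C := by
  have h2 : (1 / 2 : ℝ) • v + (1 / 2 : ℝ) • w ∈ closure C :=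
    hC.2.2.1.closure hv hw (by norm_num) (by norm_num) (by norm_num)
  have := aux_smul_closure hC (show (0:ℝ) < 2 by norm_num) h2
  convert this using 1
  module

lemma aux_psi_nonneg {C : Set V} {ψ : V →L[ℝ] ℝ}
    (hψ : ∀ u ∈ closure C, u ≠ 0 → 0 < ψ u) {u : V} (hu : u ∈ closure C) : 0 ≤ ψ u := by
  rcases eq_or_ne u 0 with rfl | h
  · simp
  · exact (hψ u hu h).le

theorem revF_horofunction_busemann (C : Set V) (hC : IsOpenCone C)
    (hlines : ∀ v, v ∈ closure C → -v ∈ closure C → v = 0)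
    (ψ : V →L[ℝ] ℝ) (hψ : ∀ u ∈ closure C, u ≠ 0 → 0 < ψ u)
    (D : Set V) (hD : D = {u | u ∈ C ∧ ψ u = 1}) (hDb : Bornology.IsBounded D)
    (b : V) (hb : b ∈ D)
    (x : V) (hx : x ∈ closure D \ D) (z : V) (hz : z ∈ D) :
    (∀ s t u : ℝ, 0 < s → s ≤ t → t ≤ u → u ≤ 1 →
        revF C ((1 - u) • x + u • z) ((1 - t) • x + t • z)
          + revF C ((1 - t) • x + t • z) ((1 - s) • x + s • z)
        = revF C ((1 - u) • x + u • z) ((1 - s) • x + s • z)) ∧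
    (∀ w ∈ C, Tendsto (fun l : ℝ => revF C w ((1 - l) • x + l • z)
          - revF C b ((1 - l) • x + l • z)) (𝓝[>] (0 : ℝ))
        (𝓝 (revF C w x - revF C b x))) := by
  -- basic facts
  have hDC : D ⊆ C := fun u hu => by rw [hD] at hu; exact hu.1
  have hzC : z ∈ C := hDC hz
  have hbC : b ∈ C := hDC hb
  have hψz : ψ z = 1 := by rw [hD] at hz; exact hz.2
  have hψb : ψ b = 1 := by rw [hD] at hb; exact hb.2
  have hψx : ψ x = 1 := by
    have hcl : closure D ⊆ {u | ψ u = 1} :=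
      closure_minimal (fun u hu => by rw [hD] at hu; exact hu.2)
        (isClosed_eq ψ.continuous continuous_const)
    exact hcl hx.1
  have hxcl : x ∈ closure C := closure_mono hDC hx.1
  have hxC : x ∉ C := fun h => hx.2 (by rw [hD]; exact ⟨h, hψx⟩)
  have hx0 : x ≠ 0 := by
    intro h
    rw [h] at hψx
    simp at hψx
  -- the set T and its infimum μ
  set T : Set ℝ := {l : ℝ | 0 < l ∧ l • z - x ∈ closure C} with hTdef
  have hT_one_le : ∀ l ∈ T, (1 : ℝ) ≤ l := by
    intro l hl
    have h1 : 0 ≤ ψ (l • z - x) := aux_psi_nonneg hψ hl.2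
    have : ψ (l • z - x) = l - 1 := by simp [map_sub, hψz, hψx]
    linarith [this ▸ h1]
  have hTne : T.Nonempty := by
    have hcont : ContinuousAt (fun ε : ℝ => z - ε • x) 0 := by fun_prop
    have hev : ∀ᶠ ε in 𝓝 (0 : ℝ), z - ε • x ∈ C := by
      have h0 : Tendsto (fun ε : ℝ => z - ε • x) (𝓝 0) (𝓝 z) := by
        simpa using hcont.tendsto
      exact h0 (hC.2.1.mem_nhds hzC)
    have hev' : ∀ᶠ ε in 𝓝[>] (0 : ℝ), z - ε • x ∈ C := hev.filter_mono nhdsWithin_le_nhds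
    obtain ⟨ε, hmem, hεpos⟩ := (hev'.and (eventually_mem_nhdsWithin)).exists
    have hεpos : (0 : ℝ) < ε := hεpos
    refine ⟨ε⁻¹, inv_pos.2 hεpos, ?_⟩
    have : ε⁻¹ • (z - ε • x) ∈ C := hC.2.2.2.1 _ (inv_pos.2 hεpos) _ hmem
    have heq : ε⁻¹ • (z - ε • x) = ε⁻¹ • z - x := by
      rw [smul_sub, smul_smul, inv_mul_cancel₀ hεpos.ne']
      simp
    rw [heq] at this
    exact subset_closure this
  have hTbdd : BddBelow T := ⟨1, fun l hl => hT_one_le l hl⟩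
  have hTclosed : IsClosed T := by
    have : T = {l : ℝ | l • z - x ∈ closure C} ∩ Ici 1 := by
      ext l
      constructor
      · exact fun hl => ⟨hl.2, hT_one_le l hl⟩
      · exact fun hl => ⟨lt_of_lt_of_le one_pos hl.2, hl.1⟩
    rw [this]
    exact ((isClosed_closure).preimage (by fun_prop)).inter isClosed_Ici
  set μ : ℝ := sInf T with hμdef
  have hμT : μ ∈ T := hTclosed.csInf_mem hTne hTbdd
  have hμpos : 0 < μ := hμT.1
  have hμ1 : 1 ≤ μ := hT_one_le μ hμT
  have hμ_min : ∀ l ∈ T, μ ≤ l := fun l hl => csInf_le hTbdd hl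
  -- the key cone lemma
  have key : ∀ α β : ℝ, α • x + β • z ∈ closure C → 0 ≤ β ∧ 0 ≤ μ * α + β := by
    intro α β hm
    have hβ : 0 ≤ β := by
      by_contra hβneg
      push_neg at hβneg
      have hzz : (-β) • z ∈ C := hC.2.2.2.1 _ (by linarith) z hzC
      have hαx : α • x ∈ C := by
        have := aux_closure_add_mem hC hm hzz
        convert this using 1
        module
      rcases lt_trichotomy α 0 with h | h | h
      · have h1 : 0 ≤ ψ (α • x) := aux_psi_nonneg hψ (subset_closure hαx)
        have h2 : ψ (α • x) = α := by simp [hψx]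
        linarith [h2 ▸ h1]
      · rw [h, zero_smul] at hαx
        exact hC.2.2.2.2 hαx
      · have : x ∈ C := by
          have := hC.2.2.2.1 α⁻¹ (inv_pos.2 h) _ hαx
          rwa [smul_smul, inv_mul_cancel₀ h.ne', one_smul] at this
        exact hxC this
    refine ⟨hβ, ?_⟩
    by_contra hneg
    push_neg at hneg
    have hα : α < 0 := by nlinarith
    have hα0 : α ≠ 0 := hα.ne
    have hnegα : (0:ℝ) < -α := neg_pos.2 hα
    rcases hβ.lt_or_eq with hβpos | hβ0
    · -- β > 0 : (−α)⁻¹ scaling shows β/(-α) ∈ T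
      have hl' : β * (-α)⁻¹ ∈ T := by
        constructor
        · exact mul_pos hβpos (inv_pos.2 hnegα)
        · have h1 : (-α)⁻¹ • (α • x + β • z) ∈ closure C :=
            aux_smul_closure hC (inv_pos.2 hnegα) hm
          have heq : (-α)⁻¹ • (α • x + β • z) = (β * (-α)⁻¹) • z - x := by
            match_scalars <;> field_simp
          rwa [heq] at h1
      have hμle := hμ_min _ hl'
      have h2 : μ * (-α) ≤ β := by
        have h3 := mul_le_mul_of_nonneg_right hμle hnegα.le
        rwa [mul_assoc, inv_mul_cancel₀ hnegα.ne', mul_one] at h3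
      nlinarith
    · -- β = 0 : α • x ∈ closure C with α < 0 gives -x ∈ closure C
      rw [← hβ0, zero_smul, add_zero] at hm
      have h1 : (-α)⁻¹ • (α • x) ∈ closure C := aux_smul_closure hC (inv_pos.2 hnegα) hm
      have heq : (-α)⁻¹ • (α • x) = -x := by
        match_scalars
        field_simp
      rw [heq] at h1
      exact hx0 (hlines x hxcl h1)
  -- positivity of ρ
  have hρpos : ∀ r : ℝ, 0 < r → r ≤ 1 → 0 < μ * (1 - r) + r := by
    intro r h1 h2
    nlinarith
  -- the exact formula for funkM along the segment
  have h_formula : ∀ t u : ℝ, 0 < t → t ≤ u → u ≤ 1 →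
      funkM C ((1 - t) • x + t • z) ((1 - u) • x + u • z)
        = (μ * (1 - t) + t) / (μ * (1 - u) + u) := by
    intro t u ht htu hu1
    have htpos : 0 < t := ht
    have hupos : 0 < u := lt_of_lt_of_le ht htu
    have hρt : 0 < μ * (1 - t) + t := hρpos t htpos (le_trans htu hu1)
    have hρu : 0 < μ * (1 - u) + u := hρpos u hupos hu1
    have heq : ((μ * (1 - t) + t) / (μ * (1 - u) + u)) • ((1 - u) • x + u • z)
        - ((1 - t) • x + t • z) = ((u - t) / (μ * (1 - u) + u)) • (μ • z - x) := by
      match_scalars <;> (field_simp; ring)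
    have hmemb : (μ * (1 - t) + t) / (μ * (1 - u) + u)
        ∈ {l : ℝ | 0 < l ∧ l • ((1 - u) • x + u • z) - ((1 - t) • x + t • z) ∈ closure C} := by
      refine ⟨div_pos hρt hρu, ?_⟩
      rw [heq]
      exact aux_smul_closure' hC (div_nonneg (by linarith) hρu.le) hμT.2
    rw [funkM]
    apply le_antisymm
    · exact csInf_le ⟨0, fun l hl => hl.1.le⟩ hmemb
    · apply le_csInf ⟨_, hmemb⟩
      · intro l hl
        obtain ⟨hlpos, hlmem⟩ := hl
        have heq : l • ((1 - u) • x + u • z) - ((1 - t) • x + t • z)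
            = (l * (1 - u) - (1 - t)) • x + (l * u - t) • z := by
          match_scalars <;> ring
        rw [heq] at hlmem
        obtain ⟨hβ, hαβ⟩ := key _ _ hlmem
        rw [div_le_iff₀ hρu]
        nlinarith
  constructor
  · -- Part 1: geodesic
    intro s t u hs hst htu hu1
    have hs1 : s ≤ 1 := le_trans hst (le_trans htu hu1)
    have ht1 : t ≤ 1 := le_trans htu hu1
    have htpos : 0 < t := lt_of_lt_of_le hs hst
    have hupos : 0 < u := lt_of_lt_of_le htpos htu
    have hρs : 0 < μ * (1 - s) + s := hρpos s hs hs1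
    have hρt : 0 < μ * (1 - t) + t := hρpos t htpos ht1
    have hρu : 0 < μ * (1 - u) + u := hρpos u hupos hu1
    rw [revF, revF, revF, h_formula t u htpos htu hu1, h_formula s t hs hst ht1,
      h_formula s u hs (le_trans hst htu) hu1,
      Real.log_div hρt.ne' hρu.ne', Real.log_div hρs.ne' hρt.ne',
      Real.log_div hρs.ne' hρu.ne']
    ring
  · -- Part 2: convergence
    have main : ∀ w : V, w ∈ C →
        Tendsto (fun l : ℝ => revF C w ((1 - l) • x + l • z)) (𝓝[>] (0 : ℝ))
          (𝓝 (revF C w x)) := by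
      intro w hw
      have hw0 : w ≠ 0 := fun h => hC.2.2.2.2 (h ▸ hw)
      have hψw : 0 < ψ w := hψ w (subset_closure hw) hw0
      obtain ⟨ε, hεpos, hball⟩ := Metric.isOpen_iff.mp hC.2.1 w hw
      have hne : ∀ y : V, {l : ℝ | 0 < l ∧ l • w - y ∈ closure C}.Nonempty := by
        intro y
        have hlpos : 0 < ‖y‖ / ε + 1 := by positivity
        refine ⟨‖y‖ / ε + 1, hlpos, ?_⟩
        have hmem : w - (‖y‖ / ε + 1)⁻¹ • y ∈ Metric.ball w ε := by
          rw [Metric.mem_ball, dist_eq_norm]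
          have h1 : w - (‖y‖ / ε + 1)⁻¹ • y - w = -((‖y‖ / ε + 1)⁻¹ • y) := by abel
          rw [h1, norm_neg, norm_smul, Real.norm_eq_abs, abs_of_pos (inv_pos.2 hlpos),
            inv_mul_lt_iff₀ hlpos]
          have h2 : (‖y‖ / ε + 1) * ε = ‖y‖ + ε := by field_simp
          rw [h2]
          linarith
        have h3 : (‖y‖ / ε + 1) • (w - (‖y‖ / ε + 1)⁻¹ • y) ∈ C :=
          hC.2.2.2.1 _ hlpos _ (hball hmem)
        have heq : (‖y‖ / ε + 1) • (w - (‖y‖ / ε + 1)⁻¹ • y) = (‖y‖ / ε + 1) • w - y := by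
          match_scalars <;> (field_simp; try ring)
        rw [heq] at h3
        exact subset_closure h3
      have hbdd : ∀ y : V, BddBelow {l : ℝ | 0 < l ∧ l • w - y ∈ closure C} :=
        fun y => ⟨0, fun l hl => hl.1.le⟩
      have key2 : ∀ y y' : V, funkM C y' w ≤ funkM C y w + 2 / ε * ‖y' - y‖ := by
        intro y y'
        rcases eq_or_ne y' y with rfl | hne'
        · simp
        have hdpos : 0 < ‖y' - y‖ := norm_pos_iff.2 (sub_ne_zero.2 hne')
        have hc1 : (0:ℝ) < 2 / ε * ‖y' - y‖ := by positivity
        have step : ∀ l ∈ {l : ℝ | 0 < l ∧ l • w - y ∈ closure C},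
            funkM C y' w ≤ l + 2 / ε * ‖y' - y‖ := by
          intro l hl
          have hmem : w - (ε / (2 * ‖y' - y‖)) • (y' - y) ∈ Metric.ball w ε := by
            rw [Metric.mem_ball, dist_eq_norm]
            have h1 : w - (ε / (2 * ‖y' - y‖)) • (y' - y) - w
                = -((ε / (2 * ‖y' - y‖)) • (y' - y)) := by abel
            rw [h1, norm_neg, norm_smul, Real.norm_eq_abs,
              abs_of_pos (div_pos hεpos (by linarith))]
            have h2 : ε / (2 * ‖y' - y‖) * ‖y' - y‖ = ε / 2 := by
              field_simp
            rw [h2]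
            linarith
          have hC2 : (2 / ε * ‖y' - y‖) • (w - (ε / (2 * ‖y' - y‖)) • (y' - y)) ∈ C :=
            hC.2.2.2.1 _ hc1 _ (hball hmem)
          have heq2 : (2 / ε * ‖y' - y‖) • (w - (ε / (2 * ‖y' - y‖)) • (y' - y))
              = (2 / ε * ‖y' - y‖) • w - (y' - y) := by
            match_scalars <;> (field_simp; try ring)
          rw [heq2] at hC2
          have hmem2 : (l + 2 / ε * ‖y' - y‖)
              ∈ {l : ℝ | 0 < l ∧ l • w - y' ∈ closure C} := by
            refine ⟨add_pos hl.1 hc1, ?_⟩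
            have heq3 : (l + 2 / ε * ‖y' - y‖) • w - y'
                = (l • w - y) + ((2 / ε * ‖y' - y‖) • w - (y' - y)) := by
              module
            rw [heq3]
            exact subset_closure (aux_closure_add_mem hC hl.2 hC2)
          have h5 : sInf {l : ℝ | 0 < l ∧ l • w - y' ∈ closure C}
              ≤ l + 2 / ε * ‖y' - y‖ := csInf_le (hbdd y') hmem2
          rw [funkM]
          exact h5
        have h4 : funkM C y' w - 2 / ε * ‖y' - y‖ ≤ funkM C y w := by
          rw [funkM]
          refine le_csInf (hne y) (fun l hl => ?_)
          have hstep := step l hl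
          rw [funkM] at hstep
          linarith
        linarith
      have hGabs : ∀ y : V, |funkM C y w - funkM C x w| ≤ 2 / ε * ‖y - x‖ := by
        intro y
        rw [abs_sub_le_iff]
        constructor
        · linarith [key2 x y]
        · have h6 := key2 y x
          rw [norm_sub_rev] at h6
          linarith
      have hGcont : ContinuousAt (fun y => funkM C y w) x := by
        rw [Metric.continuousAt_iff]
        intro δ hδ
        refine ⟨ε * δ / 4, by positivity, fun {y} hy => ?_⟩
        rw [Real.dist_eq]
        calc |funkM C y w - funkM C x w| ≤ 2 / ε * ‖y - x‖ := hGabs y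
          _ = 2 / ε * dist y x := by rw [dist_eq_norm]
          _ < 2 / ε * (ε * δ / 4) := by
              exact mul_lt_mul_of_pos_left hy (by positivity)
          _ = δ / 2 := by field_simp; ring
          _ < δ := by linarith
      have hGxpos : 0 < funkM C x w := by
        have hle : 1 / ψ w ≤ funkM C x w := by
          rw [funkM]
          apply le_csInf (hne x)
          intro l hl
          have h1 : 0 ≤ ψ (l • w - x) := aux_psi_nonneg hψ hl.2
          have h2 : ψ (l • w - x) = l * ψ w - 1 := by simp [hψx]
          rw [h2] at h1
          rw [div_le_iff₀ hψw]
          linarith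
        exact lt_of_lt_of_le (div_pos one_pos hψw) hle
      have hpath : Tendsto (fun l : ℝ => (1 - l) • x + l • z) (𝓝[>] (0:ℝ)) (𝓝 x) := by
        have hc : Continuous (fun l : ℝ => (1 - l) • x + l • z) := by fun_prop
        have h0 : Tendsto (fun l : ℝ => (1 - l) • x + l • z) (𝓝 (0:ℝ)) (𝓝 x) := by
          simpa using hc.tendsto (0 : ℝ)
        exact h0.mono_left nhdsWithin_le_nhds
      have hlog : Tendsto Real.log (𝓝 (funkM C x w)) (𝓝 (Real.log (funkM C x w))) :=
        (Real.continuousAt_log (ne_of_gt hGxpos)).tendsto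
      have hfinal := hlog.comp (hGcont.tendsto.comp hpath)
      simpa [revF, Function.comp_def] using hfinal
    exact fun w hw => (main w hw).sub (main b hbC)
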